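/- Equip GSp₄(ℚ_p) with the subspace topology induced from the space of 4×4 matrices over ℚ_p. Then the subset H(ℚ_p)·τ̂·P(ℚ_p) = {ι(h)·τ̂·q : h ∈ H(ℚ_p), q ∈ P(ℚ_p)} is an open subset of GSp₄(ℚ_p). -/

import Mathlib

open Matrix

/-- The antisymmetric form defining `GSp₄`. -/
def Jmat (R : Type*) [CommRing R] : Matrix (Fin 4) (Fin 4) R :=
  !![0, 0, 0, 1;
     0, 0, 1, 0;
     0, -1, 0, 0;
     -1, 0, 0, 0]

/-- The embedding `ι : GL₂ ×_{GL₁} GL₂ → GL₄` (on the level of matrices). -/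
def iota {R : Type*} [CommRing R] (g₁ g₂ : Matrix (Fin 2) (Fin 2) R) :
    Matrix (Fin 4) (Fin 4) R :=
  !![g₁ 0 0, 0, 0, g₁ 0 1;
     0, g₂ 0 0, g₂ 0 1, 0;
     0, g₂ 1 0, g₂ 1 1, 0;
     g₁ 1 0, 0, 0, g₁ 1 1]

/-- The element `τ̂ = τ · w₁`. -/
def tauHat (R : Type*) [CommRing R] : Matrix (Fin 4) (Fin 4) R :=
  !![1, 0, 0, 0;
     1, 0, 1, 0;
     0, -1, 0, 0;
     0, 1, 0, 1]

/-- Membership in `GSp₄(R)`: `gᵀ J g = ν J` for some unit `ν`. -/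
def InGSp4 {R : Type*} [CommRing R] (g : Matrix (Fin 4) (Fin 4) R) : Prop :=
  ∃ ν : Rˣ, gᵀ * Jmat R * g = (ν : R) • Jmat R

/-- Membership in the Siegel parabolic `P(R)`: in `GSp₄(R)` with vanishing
lower-left `2 × 2` block. -/
def InSiegelP {R : Type*} [CommRing R] (g : Matrix (Fin 4) (Fin 4) R) : Prop :=
  InGSp4 g ∧ g 2 0 = 0 ∧ g 2 1 = 0 ∧ g 3 0 = 0 ∧ g 3 1 = 0

section Aux

variable {K : Type*} [Field K]

lemma detJ : (Jmat K).det = 1 := by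
  norm_num [Jmat, Matrix.det_succ_row_zero, Fin.sum_univ_succ, Fin.castSucc, Fin.castAdd,
    Fin.castLE]
  simp [Matrix.cons_val]

lemma gsp_det_ne {g : Matrix (Fin 4) (Fin 4) K} (hg : InGSp4 g) : g.det ≠ 0 := by
  obtain ⟨ν, hν⟩ := hg
  have h := congrArg Matrix.det hν
  rw [Matrix.det_mul, Matrix.det_mul, Matrix.det_transpose, Matrix.det_smul, detJ] at h
  simp only [mul_one, Fintype.card_fin] at h
  intro h0
  rw [h0] at h
  simp at h
  exact (pow_ne_zero 4 (ν.ne_zero)) h.symm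

lemma det_block_tri (A : Matrix (Fin 4) (Fin 4) K) (h20 : A 2 0 = 0) (h21 : A 2 1 = 0)
    (h30 : A 3 0 = 0) (h31 : A 3 1 = 0) :
    A.det = (A 0 0 * A 1 1 - A 0 1 * A 1 0) * (A 2 2 * A 3 3 - A 2 3 * A 3 2) := by
  simp [Matrix.det_succ_row_zero, Fin.sum_univ_succ, Fin.succAbove, Matrix.submatrix_apply,
    Fin.castSucc, Fin.castAdd, Fin.castLE, h20, h21, h30, h31,
    show (Fin.succ 2 : Fin 4) = 3 from rfl]
  ring

lemma forward_ne {g₁ g₂ : Matrix (Fin 2) (Fin 2) K} {q : Matrix (Fin 4) (Fin 4) K}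
    (h₁ : IsUnit g₁.det) (hq : InSiegelP q) :
    (iota g₁ g₂ * tauHat K * q) 0 0 * (iota g₁ g₂ * tauHat K * q) 3 1
      - (iota g₁ g₂ * tauHat K * q) 0 1 * (iota g₁ g₂ * tauHat K * q) 3 0 ≠ 0 := by
  obtain ⟨hqg, h20, h21, h30, h31⟩ := hq
  have hdq : q.det ≠ 0 := gsp_det_ne hqg
  have hA : q 0 0 * q 1 1 - q 0 1 * q 1 0 ≠ 0 := by
    intro h
    exact hdq (by rw [det_block_tri q h20 h21 h30 h31, h, zero_mul])
  have hkey : (iota g₁ g₂ * tauHat K * q) 0 0 * (iota g₁ g₂ * tauHat K * q) 3 1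
      - (iota g₁ g₂ * tauHat K * q) 0 1 * (iota g₁ g₂ * tauHat K * q) 3 0
      = g₁.det * (q 0 0 * q 1 1 - q 0 1 * q 1 0) := by
    simp [Matrix.mul_apply, Fin.sum_univ_four, iota, tauHat, Matrix.det_fin_two,
      h20, h21, h30, h31]
    ring
  rw [hkey]
  exact mul_ne_zero h₁.ne_zero hA

lemma backward_mem {g : Matrix (Fin 4) (Fin 4) K} (hg : InGSp4 g)
    (hd : g 0 0 * g 3 1 - g 0 1 * g 3 0 ≠ 0) :
    ∃ (g₁ g₂ : Matrix (Fin 2) (Fin 2) K) (q : Matrix (Fin 4) (Fin 4) K),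
      IsUnit g₁.det ∧ IsUnit g₂.det ∧ g₁.det = g₂.det ∧ InSiegelP q ∧
      g = iota g₁ g₂ * tauHat K * q := by
  obtain ⟨ν, hν⟩ := hg
  have h01' := congrFun (congrFun hν 0) 1
  simp [Matrix.mul_apply, Fin.sum_univ_four, Jmat] at h01'
  have h01 : g 0 0 * g 3 1 + g 1 0 * g 2 1 - g 2 0 * g 1 1 - g 3 0 * g 0 1 = 0 := by
    linear_combination h01'
  set d : K := g 0 0 * g 3 1 - g 0 1 * g 3 0 with hd_def
  set M : Matrix (Fin 4) (Fin 4) K :=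
    !![g 0 0, g 0 1, 0, g 0 1; g 1 0, g 1 1, g 1 0, 0;
       g 2 0, g 2 1, g 2 0, 0; g 3 0, g 3 1, 0, g 3 1] with hM_def
  have hMG : Mᵀ * Jmat K * M = d • Jmat K := by
    rw [hM_def, hd_def]
    ext i j
    fin_cases i <;> fin_cases j <;>
      simp [Jmat, Matrix.mul_apply, Matrix.transpose_apply, Fin.sum_univ_four,
        Matrix.vecHead, Matrix.vecTail] <;>
      first | ring1 | linear_combination h01 | linear_combination -h01
  have hMgsp : InGSp4 M := ⟨Units.mk0 d hd, by simpa using hMG⟩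
  have hMdet : IsUnit M.det := (gsp_det_ne hMgsp).isUnit
  have hinv : M⁻¹ * M = 1 := Matrix.nonsing_inv_mul M hMdet
  have hinv' : M * M⁻¹ = 1 := Matrix.mul_nonsing_inv M hMdet
  have hiotatau : iota !![g 0 0, g 0 1; g 3 0, g 3 1] !![g 1 0, -(g 1 1); g 2 0, -(g 2 1)]
      * tauHat K = M := by
    rw [hM_def]
    ext i j
    fin_cases i <;> fin_cases j <;>
      simp [iota, tauHat, Matrix.mul_apply, Fin.sum_univ_four, Matrix.vecHead, Matrix.vecTail]
  -- the inverse conjugation identity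
  have hJeq : Jmat K = d⁻¹ • (Mᵀ * Jmat K * M) := by
    rw [hMG, smul_smul, inv_mul_cancel₀ hd, one_smul]
  have hTM : (M⁻¹)ᵀ * Mᵀ = 1 := by
    rw [← Matrix.transpose_mul, hinv', Matrix.transpose_one]
  have hJ : (M⁻¹)ᵀ * Jmat K * M⁻¹ = d⁻¹ • Jmat K := by
    calc (M⁻¹)ᵀ * Jmat K * M⁻¹
        = (M⁻¹)ᵀ * (d⁻¹ • (Mᵀ * Jmat K * M)) * M⁻¹ := by rw [← hJeq]
      _ = d⁻¹ • ((M⁻¹)ᵀ * Mᵀ * Jmat K * (M * M⁻¹)) := by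
          simp only [Matrix.mul_smul, Matrix.smul_mul, Matrix.mul_assoc]
      _ = d⁻¹ • Jmat K := by rw [hTM, hinv', Matrix.one_mul, Matrix.mul_one]
  have hqgsp : InGSp4 (M⁻¹ * g) := by
    refine ⟨(Units.mk0 d hd)⁻¹ * ν, ?_⟩
    have : (M⁻¹ * g)ᵀ * Jmat K * (M⁻¹ * g) = (d⁻¹ * (ν : K)) • Jmat K := by
      calc (M⁻¹ * g)ᵀ * Jmat K * (M⁻¹ * g)
          = gᵀ * ((M⁻¹)ᵀ * Jmat K * M⁻¹) * g := by
            rw [Matrix.transpose_mul]; simp only [Matrix.mul_assoc]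
        _ = gᵀ * (d⁻¹ • Jmat K) * g := by rw [hJ]
        _ = d⁻¹ • (gᵀ * Jmat K * g) := by
            simp only [Matrix.mul_smul, Matrix.smul_mul]
        _ = (d⁻¹ * (ν : K)) • Jmat K := by rw [hν, smul_smul]
    simpa using this
  have hcol0 : ∀ k : Fin 4, g k 0 = M k 0 := by
    intro k; rw [hM_def]; fin_cases k <;> simp
  have hcol1 : ∀ k : Fin 4, g k 1 = M k 1 := by
    intro k; rw [hM_def]; fin_cases k <;> simp
  have hq0 : ∀ i : Fin 4, (M⁻¹ * g) i 0 = (1 : Matrix (Fin 4) (Fin 4) K) i 0 := by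
    intro i
    rw [← hinv, Matrix.mul_apply, Matrix.mul_apply]
    exact Finset.sum_congr rfl fun k _ => by rw [hcol0 k]
  have hq1 : ∀ i : Fin 4, (M⁻¹ * g) i 1 = (1 : Matrix (Fin 4) (Fin 4) K) i 1 := by
    intro i
    rw [← hinv, Matrix.mul_apply, Matrix.mul_apply]
    exact Finset.sum_congr rfl fun k _ => by rw [hcol1 k]
  refine ⟨!![g 0 0, g 0 1; g 3 0, g 3 1], !![g 1 0, -(g 1 1); g 2 0, -(g 2 1)], M⁻¹ * g,
    ?_, ?_, ?_, ⟨hqgsp, ?_, ?_, ?_, ?_⟩, ?_⟩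
  · rw [Matrix.det_fin_two_of]
    exact isUnit_iff_ne_zero.mpr hd
  · rw [Matrix.det_fin_two_of]
    refine isUnit_iff_ne_zero.mpr ?_
    intro h
    exact hd (by rw [hd_def]; linear_combination h01 + h)
  · rw [Matrix.det_fin_two_of, Matrix.det_fin_two_of]
    linear_combination h01
  · rw [hq0 2]; simp [Matrix.one_apply]
  · rw [hq1 2]; simp [Matrix.one_apply]
  · rw [hq0 3]; simp [Matrix.one_apply]
  · rw [hq1 3]; simp [Matrix.one_apply]
  · rw [hiotatau, ← Matrix.mul_assoc, hinv', Matrix.one_mul]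

end Aux

/-- The subset `H(ℚ_p)·τ̂·P(ℚ_p)` is open in `GSp₄(ℚ_p)` (with the subspace
topology induced from the space of `4×4` matrices over `ℚ_p`). -/
theorem stmt3 (p : ℕ) [Fact p.Prime] :
    IsOpen {g : {m : Matrix (Fin 4) (Fin 4) ℚ_[p] // InGSp4 m} |
      ∃ (g₁ g₂ : Matrix (Fin 2) (Fin 2) ℚ_[p]) (q : Matrix (Fin 4) (Fin 4) ℚ_[p]),
        IsUnit g₁.det ∧ IsUnit g₂.det ∧ g₁.det = g₂.det ∧ InSiegelP q ∧
        (g : Matrix (Fin 4) (Fin 4) ℚ_[p]) = iota g₁ g₂ * tauHat ℚ_[p] * q} := by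
  have hset : {g : {m : Matrix (Fin 4) (Fin 4) ℚ_[p] // InGSp4 m} |
      ∃ (g₁ g₂ : Matrix (Fin 2) (Fin 2) ℚ_[p]) (q : Matrix (Fin 4) (Fin 4) ℚ_[p]),
        IsUnit g₁.det ∧ IsUnit g₂.det ∧ g₁.det = g₂.det ∧ InSiegelP q ∧
        (g : Matrix (Fin 4) (Fin 4) ℚ_[p]) = iota g₁ g₂ * tauHat ℚ_[p] * q}
      = (fun g : {m : Matrix (Fin 4) (Fin 4) ℚ_[p] // InGSp4 m} =>
          (g : Matrix (Fin 4) (Fin 4) ℚ_[p]) 0 0 * (g : Matrix (Fin 4) (Fin 4) ℚ_[p]) 3 1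
            - (g : Matrix (Fin 4) (Fin 4) ℚ_[p]) 0 1 * (g : Matrix (Fin 4) (Fin 4) ℚ_[p]) 3 0)
        ⁻¹' ({0}ᶜ) := by
    ext g
    simp only [Set.mem_setOf_eq, Set.mem_preimage, Set.mem_compl_iff, Set.mem_singleton_iff]
    constructor
    · rintro ⟨g₁, g₂, q, hu1, hu2, hdet, hq, hgeq⟩
      rw [hgeq]
      exact forward_ne hu1 hq
    · intro hne
      exact backward_mem g.2 hne
  rw [hset]
  have he : ∀ i j : Fin 4,
      Continuous fun g : {m : Matrix (Fin 4) (Fin 4) ℚ_[p] // InGSp4 m} =>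
        (g : Matrix (Fin 4) (Fin 4) ℚ_[p]) i j := fun i j =>
    (continuous_apply_apply i j).comp continuous_subtype_val
  exact (((he 0 0).mul (he 3 1)).sub ((he 0 1).mul (he 3 0))).isOpen_preimage _
    isOpen_compl_singleton
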